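/- Suppose α_0, …, α_ι > 0 and that P satisfies the coordinate-distribution assumption and has finite moments of all orders. Let Λ be the invertible N×N change-of-basis matrix with Φ(x) = Λᵀ Ψ(x) for all x. Then there is a constant C(ι) depending only on ι, P, and α_0,…,α_ι — in particular independent of the dimension d — such that ‖Λ‖_op ≤ C(ι) and ‖Λ^{−1}‖_op ≤ C(ι), where ‖·‖_op denotes the ℓ₂→ℓ₂ operator norm. -/

import Mathlib

open MeasureTheory

/-- The finite set of multi-indices `r : Fin d → ℕ` with `Σ_i r_i ≤ ι`, encoded with
coordinates in `Fin (ι+1)`. -/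
abbrev MIdx (d ι : ℕ) := {r : Fin d → Fin (ι + 1) // ∑ i, (r i : ℕ) ≤ ι}

/-- Total degree `|r|` of a multi-index. -/
def degIdx (d ι : ℕ) (r : MIdx d ι) : ℕ := ∑ i, (r.1 i : ℕ)

/-- The multinomial coefficient `c_r = |r|! / (r_1! ⋯ r_d!)`, as a real number. -/
noncomputable def multinom (d ι : ℕ) (r : MIdx d ι) : ℝ :=
  (Nat.factorial (degIdx d ι r) : ℝ) / ∏ i, (Nat.factorial (r.1 i : ℕ) : ℝ)

/-- The monomial feature map `Φ_r(x) = (c_r α_{|r|})^{1/2} p_r(x) / d^{|r|/2}`. -/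
noncomputable def Phi (d ι : ℕ) (a : ℕ → ℝ) (x : Fin d → ℝ) (r : MIdx d ι) : ℝ :=
  Real.sqrt (multinom d ι r * a (degIdx d ι r)) * (∏ i, x i ^ (r.1 i : ℕ)) /
    (d : ℝ) ^ ((degIdx d ι r : ℝ) / 2)

/-- The orthonormal-polynomial feature map `Ψ_r(x) = (c_r α_{|r|})^{1/2} q_r(x) / d^{|r|/2}`. -/
noncomputable def Psi (d ι : ℕ) (q : ℕ → Polynomial ℝ) (a : ℕ → ℝ) (x : Fin d → ℝ)
    (r : MIdx d ι) : ℝ :=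
  Real.sqrt (multinom d ι r * a (degIdx d ι r)) * (∏ i, (q (r.1 i : ℕ)).eval (x i)) /
    (d : ℝ) ^ ((degIdx d ι r : ℝ) / 2)

/-! ### Auxiliary definitions and lemmas -/

open Finset

/-- The generic change-of-basis matrix built from a coefficient array `c`. -/
noncomputable def matc (d ι : ℕ) (a : ℕ → ℝ) (c : ℕ → ℕ → ℝ) :
    Matrix (MIdx d ι) (MIdx d ι) ℝ := fun s r =>
  (Real.sqrt (multinom d ι r * a (degIdx d ι r)) /
      Real.sqrt (multinom d ι s * a (degIdx d ι s))) *
    (d : ℝ) ^ (((degIdx d ι s : ℝ) - (degIdx d ι r : ℝ)) / 2) *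
    ∏ i, c (r.1 i : ℕ) (s.1 i : ℕ)

lemma idx_le {d ι : ℕ} (r : MIdx d ι) (i : Fin d) : (r.1 i : ℕ) ≤ ι :=
  le_trans (Finset.single_le_sum (f := fun i => (r.1 i : ℕ)) (fun _ _ => Nat.zero_le _)
    (Finset.mem_univ i)) r.2

lemma degIdx_le {d ι : ℕ} (r : MIdx d ι) : degIdx d ι r ≤ ι := r.2

lemma one_le_prodfact {d ι : ℕ} (r : MIdx d ι) :
    (1 : ℝ) ≤ ∏ i, (Nat.factorial (r.1 i : ℕ) : ℝ) := by
  have h1 : (∏ i, ((Nat.factorial (r.1 i : ℕ) : ℝ)))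
      = ((∏ i, Nat.factorial (r.1 i : ℕ) : ℕ) : ℝ) := by push_cast; rfl
  rw [h1]
  exact_mod_cast Nat.prod_factorial_pos Finset.univ _

lemma one_le_multinom {d ι : ℕ} (r : MIdx d ι) : 1 ≤ multinom d ι r := by
  unfold multinom
  rw [le_div_iff₀ (lt_of_lt_of_le one_pos (one_le_prodfact r)), one_mul]
  have h1 : (∏ i, ((Nat.factorial (r.1 i : ℕ) : ℝ)))
      = ((∏ i, Nat.factorial (r.1 i : ℕ) : ℕ) : ℝ) := by push_cast; rfl
  rw [h1]
  unfold degIdx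
  exact_mod_cast Nat.le_of_dvd (Nat.factorial_pos _)
    (Nat.prod_factorial_dvd_factorial_sum _ _)

lemma multinom_le {d ι : ℕ} (r : MIdx d ι) : multinom d ι r ≤ (Nat.factorial ι : ℝ) := by
  unfold multinom
  refine le_trans (div_le_self (by positivity) (one_le_prodfact r)) ?_
  exact_mod_cast Nat.factorial_le (degIdx_le r)

lemma multinom_pos {d ι : ℕ} (r : MIdx d ι) : 0 < multinom d ι r :=
  lt_of_lt_of_le one_pos (one_le_multinom r)

lemma weight_pos {d ι : ℕ} {a : ℕ → ℝ} (ha : ∀ i ≤ ι, 0 < a i) (r : MIdx d ι) :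
    0 < Real.sqrt (multinom d ι r * a (degIdx d ι r)) :=
  Real.sqrt_pos.2 (mul_pos (multinom_pos r) (ha _ (degIdx_le r)))

lemma card_supp_le {d ι : ℕ} (r : MIdx d ι) :
    (Finset.univ.filter fun i => 0 < (r.1 i : ℕ)).card ≤ ι := by
  calc (Finset.univ.filter fun i => 0 < (r.1 i : ℕ)).card
      = ∑ i ∈ Finset.univ.filter fun i => 0 < (r.1 i : ℕ), 1 := by
        rw [Finset.card_eq_sum_ones]
    _ ≤ ∑ i ∈ Finset.univ.filter fun i => 0 < (r.1 i : ℕ), (r.1 i : ℕ) :=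
        Finset.sum_le_sum fun i hi => (Finset.mem_filter.1 hi).2
    _ ≤ ∑ i, (r.1 i : ℕ) :=
        Finset.sum_le_sum_of_subset_of_nonneg (Finset.filter_subset _ _)
          (fun _ _ _ => Nat.zero_le _)
    _ ≤ ι := r.2

/-- Expansion of a product of one-dimensional expansions over multi-indices. -/
lemma expand_prod {d ι : ℕ} (c : ℕ → ℕ → ℝ) (hcz : ∀ k j, k < j → c k j = 0)
    (f g : ℕ → ℝ → ℝ)
    (hfg : ∀ k ≤ ι, ∀ t, f k t = ∑ j ∈ Finset.range (ι + 1), c k j * g j t)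
    (x : Fin d → ℝ) (r : MIdx d ι) :
    (∏ i, f (r.1 i : ℕ) (x i)) =
      ∑ s : MIdx d ι, (∏ i, c (r.1 i : ℕ) (s.1 i : ℕ)) * ∏ i, g (s.1 i : ℕ) (x i) := by
  classical
  have step1 : (∏ i, f (r.1 i : ℕ) (x i)) =
      ∑ s : Fin d → Fin (ι + 1), ∏ i, (c (r.1 i : ℕ) (s i : ℕ) * g (s i : ℕ) (x i)) := by
    calc (∏ i, f (r.1 i : ℕ) (x i))
        = ∏ i, ∑ j ∈ (Finset.univ : Finset (Fin (ι + 1))),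
            (fun (i : Fin d) (j : Fin (ι + 1)) =>
              c (r.1 i : ℕ) (j : ℕ) * g (j : ℕ) (x i)) i j := by
          refine Finset.prod_congr rfl fun i _ => ?_
          rw [hfg _ (idx_le r i), ← Fin.sum_univ_eq_sum_range]
      _ = ∑ s ∈ Fintype.piFinset (fun _ : Fin d => (Finset.univ : Finset (Fin (ι + 1)))),
            ∏ i, (fun (i : Fin d) (j : Fin (ι + 1)) =>
              c (r.1 i : ℕ) (j : ℕ) * g (j : ℕ) (x i)) i (s i) :=
          Finset.prod_univ_sum _ _
      _ = ∑ s : Fin d → Fin (ι + 1), ∏ i, (c (r.1 i : ℕ) (s i : ℕ) * g (s i : ℕ) (x i)) := by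
          rw [Fintype.piFinset_univ]
  rw [step1]
  rw [← Finset.sum_filter_add_sum_filter_not Finset.univ
    (fun s : Fin d → Fin (ι + 1) => ∑ i, (s i : ℕ) ≤ ι)]
  have step2 : ∑ s ∈ Finset.univ.filter
      (fun s : Fin d → Fin (ι + 1) => ¬ (∑ i, (s i : ℕ) ≤ ι)),
      ∏ i, (c (r.1 i : ℕ) (s i : ℕ) * g (s i : ℕ) (x i)) = 0 := by
    refine Finset.sum_eq_zero fun s hs => ?_
    have hs' := (Finset.mem_filter.1 hs).2
    have : ∃ i, (r.1 i : ℕ) < (s i : ℕ) := by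
      by_contra h
      push_neg at h
      exact hs' (le_trans (Finset.sum_le_sum fun i _ => h i) r.2)
    obtain ⟨i, hi⟩ := this
    exact Finset.prod_eq_zero (Finset.mem_univ i) (by rw [hcz _ _ hi, zero_mul])
  rw [step2, add_zero]
  rw [Finset.sum_subtype (p := fun s : Fin d → Fin (ι + 1) => ∑ i, (s i : ℕ) ≤ ι)
      (Finset.univ.filter (fun s : Fin d → Fin (ι + 1) => ∑ i, (s i : ℕ) ≤ ι))
      (fun s => by simp) (fun s => ∏ i, (c (r.1 i : ℕ) (s i : ℕ) * g (s i : ℕ) (x i)))]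
  exact Finset.sum_congr rfl fun s _ => Finset.prod_mul_distrib

/-- The key transfer identity: a `Phi`-like feature vector expands in terms of a
`Psi`-like feature vector through `matc`. -/
lemma matc_transfer {d ι : ℕ} (hd : 0 < d) {a : ℕ → ℝ} (ha : ∀ i ≤ ι, 0 < a i)
    (c : ℕ → ℕ → ℝ) (hcz : ∀ k j, k < j → c k j = 0)
    (f g : ℕ → ℝ → ℝ)
    (hfg : ∀ k ≤ ι, ∀ t, f k t = ∑ j ∈ Finset.range (ι + 1), c k j * g j t)
    (x : Fin d → ℝ) (r : MIdx d ι) :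
    Real.sqrt (multinom d ι r * a (degIdx d ι r)) * (∏ i, f (r.1 i : ℕ) (x i)) /
        (d : ℝ) ^ ((degIdx d ι r : ℝ) / 2)
      = ∑ s : MIdx d ι, matc d ι a c s r *
          (Real.sqrt (multinom d ι s * a (degIdx d ι s)) * (∏ i, g (s.1 i : ℕ) (x i)) /
            (d : ℝ) ^ ((degIdx d ι s : ℝ) / 2)) := by
  have hd0 : (0 : ℝ) < (d : ℝ) := by exact_mod_cast hd
  rw [expand_prod c hcz f g hfg x r, Finset.mul_sum, Finset.sum_div]
  refine Finset.sum_congr rfl fun s _ => ?_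
  unfold matc
  have hws : Real.sqrt (multinom d ι s * a (degIdx d ι s)) ≠ 0 := (weight_pos ha s).ne'
  have hdr : (d : ℝ) ^ ((degIdx d ι r : ℝ) / 2) ≠ 0 := (Real.rpow_pos_of_pos hd0 _).ne'
  have hds : (d : ℝ) ^ ((degIdx d ι s : ℝ) / 2) ≠ 0 := (Real.rpow_pos_of_pos hd0 _).ne'
  have hsplit : ((degIdx d ι s : ℝ) - (degIdx d ι r : ℝ)) / 2
      = (degIdx d ι s : ℝ) / 2 - (degIdx d ι r : ℝ) / 2 := by ring
  rw [hsplit, Real.rpow_sub hd0]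
  field_simp

/-- Linear independence of the monomial features. -/
lemma phi_indep {d ι : ℕ} (hd : 0 < d) {a : ℕ → ℝ} (ha : ∀ i ≤ ι, 0 < a i)
    (v : MIdx d ι → ℝ) (hv : ∀ x : Fin d → ℝ, ∑ s : MIdx d ι, v s * Phi d ι a x s = 0) :
    v = 0 := by
  classical
  have hd0 : (0 : ℝ) < (d : ℝ) := by exact_mod_cast hd
  set k : MIdx d ι → ℝ := fun s =>
    Real.sqrt (multinom d ι s * a (degIdx d ι s)) / (d : ℝ) ^ ((degIdx d ι s : ℝ) / 2)
    with hk
  have hkpos : ∀ s, 0 < k s := fun s =>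
    div_pos (weight_pos ha s) (Real.rpow_pos_of_pos hd0 _)
  set fs : MIdx d ι → (Fin d →₀ ℕ) := fun s =>
    Finsupp.equivFunOnFinite.symm (fun i => (s.1 i : ℕ)) with hfs
  have hfs_inj : Function.Injective fs := by
    intro s t hst
    have : (fun i => (s.1 i : ℕ)) = fun i => (t.1 i : ℕ) := by
      have := congrArg (fun (f : Fin d →₀ ℕ) => (f : Fin d → ℕ)) hst
      simpa [hfs] using this
    exact Subtype.ext (funext fun i => Fin.ext (congrFun this i))
  set p : MvPolynomial (Fin d) ℝ :=
    ∑ s : MIdx d ι, MvPolynomial.monomial (fs s) (v s * k s) with hp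
  have heval : ∀ x : Fin d → ℝ, MvPolynomial.eval x p = ∑ s : MIdx d ι, v s * Phi d ι a x s := by
    intro x
    rw [hp, map_sum]
    refine Finset.sum_congr rfl fun s _ => ?_
    rw [MvPolynomial.eval_monomial]
    have : ((fs s).prod fun n e => x n ^ e) = ∏ i, x i ^ (s.1 i : ℕ) := by
      rw [Finsupp.prod_pow]
      exact Finset.prod_congr rfl fun i _ => by simp [hfs]
    rw [this]
    unfold Phi
    rw [hk]
    ring
  have hp0 : p = 0 := by
    apply MvPolynomial.funext
    intro x
    rw [heval x, hv x, map_zero]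
  have hcoeff : ∀ s : MIdx d ι, v s * k s = 0 := by
    intro s
    have := congrArg (MvPolynomial.coeff (fs s)) hp0
    rw [hp] at this
    rw [MvPolynomial.coeff_sum] at this
    simp only [MvPolynomial.coeff_monomial, MvPolynomial.coeff_zero] at this
    rwa [Finset.sum_eq_single s (fun t _ ht => by
      rw [if_neg (fun h => ht (hfs_inj h))]) (fun h => absurd (Finset.mem_univ s) h),
      if_pos rfl] at this
  funext s
  have := hcoeff s
  rcases mul_eq_zero.1 this with h | h
  · exact h
  · exact absurd h (hkpos s).ne'

/-- If `Nᵀ` fixes all the monomial feature vectors, then `N = 1`. -/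
lemma eq_one_of_fix_phi {d ι : ℕ} (hd : 0 < d) {a : ℕ → ℝ} (ha : ∀ i ≤ ι, 0 < a i)
    (N : Matrix (MIdx d ι) (MIdx d ι) ℝ)
    (h : ∀ x : Fin d → ℝ, N.transpose.mulVec (Phi d ι a x) = Phi d ι a x) : N = 1 := by
  classical
  have key : ∀ r : MIdx d ι, (fun s => N s r - (1 : Matrix (MIdx d ι) (MIdx d ι) ℝ) s r) = 0 := by
    intro r
    apply phi_indep hd ha
    intro x
    have hr := congrFun (h x) r
    have : N.transpose.mulVec (Phi d ι a x) r = ∑ s, N s r * Phi d ι a x s := by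
      simp [Matrix.mulVec, dotProduct, Matrix.transpose_apply]
    rw [this] at hr
    have h1 : ∑ s, (1 : Matrix (MIdx d ι) (MIdx d ι) ℝ) s r * Phi d ι a x s = Phi d ι a x r := by
      rw [Finset.sum_congr rfl (fun s _ => by rw [Matrix.one_apply])]
      simp [Finset.sum_ite_eq' Finset.univ r (fun s => Phi d ι a x s)]
    calc ∑ s, (N s r - (1 : Matrix (MIdx d ι) (MIdx d ι) ℝ) s r) * Phi d ι a x s
        = (∑ s, N s r * Phi d ι a x s) -
            ∑ s, (1 : Matrix (MIdx d ι) (MIdx d ι) ℝ) s r * Phi d ι a x s := by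
          rw [← Finset.sum_sub_distrib]
          exact Finset.sum_congr rfl fun s _ => by ring
      _ = 0 := by rw [hr, h1, sub_self]
  ext s r
  have := congrFun (key r) s
  simpa [sub_eq_zero] using this

/-- Schur-type bound: row and column absolute sums bound the ℓ²→ℓ² operator norm. -/
lemma mulVec_l2_bound {n : Type*} [Fintype n] (A : Matrix n n ℝ) (R : ℝ) (hR : 0 ≤ R)
    (hrow : ∀ s, ∑ r, |A s r| ≤ R) (hcol : ∀ r, ∑ s, |A s r| ≤ R) (u : n → ℝ) :
    Real.sqrt (∑ s, A.mulVec u s ^ 2) ≤ R * Real.sqrt (∑ s, u s ^ 2) := by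
  classical
  rw [← Real.sqrt_sq hR, ← Real.sqrt_mul (by positivity)]
  apply Real.sqrt_le_sqrt
  have hstep : ∀ s, A.mulVec u s ^ 2 ≤ (∑ r, |A s r|) * ∑ r, |A s r| * u r ^ 2 := by
    intro s
    have h1 : A.mulVec u s ^ 2 ≤ (∑ r, |A s r| * |u r|) ^ 2 := by
      have h2 : |A.mulVec u s| ≤ ∑ r, |A s r| * |u r| := by
        refine le_trans (Finset.abs_sum_le_sum_abs _ _) ?_
        exact Finset.sum_le_sum fun r _ => by rw [abs_mul]
      calc A.mulVec u s ^ 2 = |A.mulVec u s| ^ 2 := (sq_abs _).symm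
        _ ≤ (∑ r, |A s r| * |u r|) ^ 2 := by
            apply pow_le_pow_left₀ (abs_nonneg _) h2
    refine h1.trans ?_
    have := Finset.sum_mul_sq_le_sq_mul_sq Finset.univ
      (fun r => Real.sqrt |A s r|) (fun r => Real.sqrt |A s r| * |u r|)
    have heq : ∀ r, Real.sqrt |A s r| * (Real.sqrt |A s r| * |u r|) = |A s r| * |u r| := by
      intro r
      rw [← mul_assoc, Real.mul_self_sqrt (abs_nonneg _)]
    calc (∑ r, |A s r| * |u r|) ^ 2
        = (∑ r, Real.sqrt |A s r| * (Real.sqrt |A s r| * |u r|)) ^ 2 := by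
          rw [Finset.sum_congr rfl fun r _ => (heq r).symm]
      _ ≤ (∑ r, Real.sqrt |A s r| ^ 2) * ∑ r, (Real.sqrt |A s r| * |u r|) ^ 2 := this
      _ = (∑ r, |A s r|) * ∑ r, |A s r| * u r ^ 2 := by
          congr 1
          · exact Finset.sum_congr rfl fun r _ => Real.sq_sqrt (abs_nonneg _)
          · refine Finset.sum_congr rfl fun r _ => ?_
            rw [mul_pow, Real.sq_sqrt (abs_nonneg _), sq_abs]
  calc ∑ s, A.mulVec u s ^ 2
      ≤ ∑ s, (∑ r, |A s r|) * ∑ r, |A s r| * u r ^ 2 := Finset.sum_le_sum fun s _ => hstep s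
    _ ≤ ∑ s, R * ∑ r, |A s r| * u r ^ 2 := by
        refine Finset.sum_le_sum fun s _ => ?_
        exact mul_le_mul_of_nonneg_right (hrow s)
          (Finset.sum_nonneg fun r _ => by positivity)
    _ = R * ∑ r, (∑ s, |A s r|) * u r ^ 2 := by
        rw [← Finset.mul_sum, Finset.sum_comm]
        congr 1
        exact Finset.sum_congr rfl fun r _ => by rw [Finset.sum_mul]
    _ ≤ R * ∑ r, R * u r ^ 2 := by
        refine mul_le_mul_of_nonneg_left (Finset.sum_le_sum fun r _ => ?_) hR
        exact mul_le_mul_of_nonneg_right (hcol r) (sq_nonneg _)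
    _ = R ^ 2 * ∑ r, u r ^ 2 := by rw [← Finset.mul_sum]; ring

/-- Entry-wise bound on the coefficient product. -/
lemma prodc_le {d ι : ℕ} (c : ℕ → ℕ → ℝ) (hc00 : c 0 0 = 1)
    (M : ℝ) (hM1 : 1 ≤ M) (hM : ∀ k j, k ≤ ι → j ≤ ι → |c k j| ≤ M)
    (r s : MIdx d ι) :
    |∏ i, c (r.1 i : ℕ) (s.1 i : ℕ)| ≤ M ^ ι ∨ ∃ i, (r.1 i : ℕ) < (s.1 i : ℕ) := by
  classical
  by_cases hle : ∀ i, (s.1 i : ℕ) ≤ (r.1 i : ℕ)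
  · left
    rw [Finset.abs_prod]
    rw [← Finset.prod_filter_mul_prod_filter_not Finset.univ (fun i => 0 < (r.1 i : ℕ))]
    have h2 : ∏ i ∈ Finset.univ.filter (fun i => ¬ 0 < (r.1 i : ℕ)),
        |c (r.1 i : ℕ) (s.1 i : ℕ)| = 1 := by
      refine Finset.prod_eq_one fun i hi => ?_
      have hri : (r.1 i : ℕ) = 0 := by
        have := (Finset.mem_filter.1 hi).2; omega
      have hsi : (s.1 i : ℕ) = 0 := by have := hle i; omega
      rw [hri, hsi, hc00, abs_one]
    rw [h2, mul_one]
    calc ∏ i ∈ Finset.univ.filter (fun i => 0 < (r.1 i : ℕ)), |c (r.1 i : ℕ) (s.1 i : ℕ)|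
        ≤ ∏ _i ∈ Finset.univ.filter (fun i => 0 < (r.1 i : ℕ)), M :=
          Finset.prod_le_prod (fun i _ => abs_nonneg _)
            (fun i _ => hM _ _ (idx_le r i) (idx_le s i))
      _ = M ^ (Finset.univ.filter (fun i => 0 < (r.1 i : ℕ))).card := by
          rw [Finset.prod_const]
      _ ≤ M ^ ι := pow_le_pow_right₀ hM1 (card_supp_le r)
  · right
    push_neg at hle
    obtain ⟨i, hi⟩ := hle
    exact ⟨i, hi⟩


lemma matc_eq_zero_of_lt {d ι : ℕ} {a : ℕ → ℝ} {c : ℕ → ℕ → ℝ}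
    (hcz : ∀ k j, k < j → c k j = 0) {r s : MIdx d ι} (i : Fin d)
    (hi : (r.1 i : ℕ) < (s.1 i : ℕ)) : matc d ι a c s r = 0 := by
  unfold matc
  rw [Finset.prod_eq_zero (Finset.mem_univ i) (hcz _ _ hi), mul_zero]

lemma matc_abs_le {d ι : ℕ} (hd : 0 < d) {a : ℕ → ℝ} (ha : ∀ i ≤ ι, 0 < a i)
    (c : ℕ → ℕ → ℝ) (hc00 : c 0 0 = 1)
    (M : ℝ) (hM1 : 1 ≤ M) (hM : ∀ k j, k ≤ ι → j ≤ ι → |c k j| ≤ M)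
    (W : ℝ)
    (hW : ∀ r s : MIdx d ι, Real.sqrt (multinom d ι r * a (degIdx d ι r)) /
        Real.sqrt (multinom d ι s * a (degIdx d ι s)) ≤ W)
    (r s : MIdx d ι) (hle : ∀ i, (s.1 i : ℕ) ≤ (r.1 i : ℕ)) :
    |matc d ι a c s r| ≤ W * M ^ ι *
      (d : ℝ) ^ (((degIdx d ι s : ℝ) - (degIdx d ι r : ℝ)) / 2) := by
  have hd0 : (0 : ℝ) < (d : ℝ) := by exact_mod_cast hd
  have hratio0 : 0 ≤ Real.sqrt (multinom d ι r * a (degIdx d ι r)) /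
      Real.sqrt (multinom d ι s * a (degIdx d ι s)) := by positivity
  have hprod : |∏ i, c (r.1 i : ℕ) (s.1 i : ℕ)| ≤ M ^ ι := by
    rcases prodc_le c hc00 M hM1 hM r s with h | ⟨i, hi⟩
    · exact h
    · exact absurd (hle i) (Nat.not_le.2 hi)
  unfold matc
  rw [abs_mul, abs_mul, abs_of_nonneg hratio0,
    abs_of_nonneg (Real.rpow_pos_of_pos hd0 _).le]
  calc Real.sqrt (multinom d ι r * a (degIdx d ι r)) /
        Real.sqrt (multinom d ι s * a (degIdx d ι s)) *
        (d : ℝ) ^ (((degIdx d ι s : ℝ) - (degIdx d ι r : ℝ)) / 2) *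
        |∏ i, c (r.1 i : ℕ) (s.1 i : ℕ)|
      ≤ W * (d : ℝ) ^ (((degIdx d ι s : ℝ) - (degIdx d ι r : ℝ)) / 2) * M ^ ι := by
        refine mul_le_mul (mul_le_mul_of_nonneg_right (hW r s)
          (Real.rpow_pos_of_pos hd0 _).le) hprod (abs_nonneg _) ?_
        have hW0 : 0 ≤ W := le_trans hratio0 (hW r s)
        positivity
    _ = W * M ^ ι * (d : ℝ) ^ (((degIdx d ι s : ℝ) - (degIdx d ι r : ℝ)) / 2) := by ring

lemma matc_row_sum {d ι : ℕ} (hd : 0 < d) {a : ℕ → ℝ} (ha : ∀ i ≤ ι, 0 < a i)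
    (c : ℕ → ℕ → ℝ) (hcz : ∀ k j, k < j → c k j = 0) (hc00 : c 0 0 = 1) (hc10 : c 1 0 = 0)
    (M : ℝ) (hM1 : 1 ≤ M) (hM : ∀ k j, k ≤ ι → j ≤ ι → |c k j| ≤ M)
    (W : ℝ)
    (hW : ∀ r s : MIdx d ι, Real.sqrt (multinom d ι r * a (degIdx d ι r)) /
        Real.sqrt (multinom d ι s * a (degIdx d ι s)) ≤ W)
    (s : MIdx d ι) :
    ∑ r : MIdx d ι, |matc d ι a c s r| ≤
      W * M ^ ι * ((((ι + 1) ^ (ι + ι) : ℕ) : ℝ) * ((ι : ℝ) + 1)) := by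
  classical
  have hd0 : (0 : ℝ) < (d : ℝ) := by exact_mod_cast hd
  have hd1 : (1 : ℝ) ≤ (d : ℝ) := by exact_mod_cast hd
  have hW0 : 0 ≤ W := le_trans (by positivity) (hW s s)
  set e : ℝ := ((d : ℝ))⁻¹ with he
  have he0 : 0 ≤ e := by positivity
  set K : ℝ := W * M ^ ι with hK
  have hK0 : 0 ≤ K := by
    have : (0:ℝ) ≤ M ^ ι := pow_nonneg (le_trans zero_le_one hM1) ι
    exact mul_nonneg hW0 this
  set V : Finset (MIdx d ι) := Finset.univ.filter
    (fun r => (∀ i, (s.1 i : ℕ) ≤ (r.1 i : ℕ)) ∧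
      ∀ i, ¬((s.1 i : ℕ) = 0 ∧ (r.1 i : ℕ) = 1)) with hV
  set B : MIdx d ι → Finset (Fin d) := fun r =>
    Finset.univ.filter (fun i => (s.1 i : ℕ) = 0 ∧ 0 < (r.1 i : ℕ)) with hB
  have hBsub : ∀ r, B r ⊆ Finset.univ.filter (fun i => 0 < (r.1 i : ℕ)) := by
    intro r i hi
    rw [hB, Finset.mem_filter] at hi
    exact Finset.mem_filter.2 ⟨Finset.mem_univ i, hi.2.2⟩
  have hBcard : ∀ r, (B r).card ≤ ι := fun r =>
    le_trans (Finset.card_le_card (hBsub r)) (card_supp_le r)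
  -- restrict to the support V
  have step0 : ∑ r : MIdx d ι, |matc d ι a c s r| = ∑ r ∈ V, |matc d ι a c s r| := by
    refine (Finset.sum_subset (Finset.subset_univ V) (fun r _ hr => ?_)).symm
    rw [hV, Finset.mem_filter] at hr
    by_cases hA : ∀ i, (s.1 i : ℕ) ≤ (r.1 i : ℕ)
    · have hBn : ¬ ∀ i, ¬((s.1 i : ℕ) = 0 ∧ (r.1 i : ℕ) = 1) := fun hBB =>
        hr ⟨Finset.mem_univ r, hA, hBB⟩
      push_neg at hBn
      obtain ⟨i, hi1, hi2⟩ := hBn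
      have hz : matc d ι a c s r = 0 := by
        unfold matc
        rw [Finset.prod_eq_zero (Finset.mem_univ i) (by rw [hi2, hi1]; exact hc10), mul_zero]
      rw [hz, abs_zero]
    · push_neg at hA
      obtain ⟨i, hi⟩ := hA
      rw [matc_eq_zero_of_lt hcz i hi, abs_zero]
  -- degree inequality on V
  have step_deg : ∀ r ∈ V, degIdx d ι s + 2 * (B r).card ≤ degIdx d ι r := by
    intro r hr
    rw [hV, Finset.mem_filter] at hr
    obtain ⟨-, hle, hne1⟩ := hr
    have h1 : ∑ i, ((s.1 i : ℕ) + if i ∈ B r then 2 else 0) ≤ ∑ i, (r.1 i : ℕ) := by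
      refine Finset.sum_le_sum fun i _ => ?_
      by_cases hiB : i ∈ B r
      · rw [if_pos hiB]
        rw [hB, Finset.mem_filter] at hiB
        have h3 := hne1 i
        omega
      · rw [if_neg hiB, add_zero]
        exact hle i
    rw [Finset.sum_add_distrib] at h1
    have h2 : ∑ i, (if i ∈ B r then 2 else 0) = 2 * (B r).card := by
      rw [Finset.sum_ite_mem, Finset.univ_inter, Finset.sum_const, smul_eq_mul]
      ring
    rw [h2] at h1
    exact h1
  -- entry bound on V
  have step_entry : ∀ r ∈ V, |matc d ι a c s r| ≤ K * e ^ (B r).card := by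
    intro r hr
    have hle : ∀ i, (s.1 i : ℕ) ≤ (r.1 i : ℕ) := by
      rw [hV, Finset.mem_filter] at hr; exact hr.2.1
    refine le_trans (matc_abs_le hd ha c hc00 M hM1 hM W hW r s hle) ?_
    refine mul_le_mul_of_nonneg_left ?_ hK0
    have hexp : ((degIdx d ι s : ℝ) - (degIdx d ι r : ℝ)) / 2 ≤ -(((B r).card : ℕ) : ℝ) := by
      have := step_deg r hr
      have h4 : ((degIdx d ι s : ℕ) : ℝ) + 2 * (((B r).card : ℕ) : ℝ) ≤
          ((degIdx d ι r : ℕ) : ℝ) := by exact_mod_cast this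
      linarith
    calc (d : ℝ) ^ (((degIdx d ι s : ℝ) - (degIdx d ι r : ℝ)) / 2)
        ≤ (d : ℝ) ^ (-(((B r).card : ℕ) : ℝ)) :=
          Real.rpow_le_rpow_of_exponent_le hd1 hexp
      _ = e ^ (B r).card := by
          rw [Real.rpow_neg hd0.le, Real.rpow_natCast, he, inv_pow]
  have step1 : ∑ r ∈ V, |matc d ι a c s r| ≤ K * ∑ r ∈ V, e ^ (B r).card := by
    rw [Finset.mul_sum]
    exact Finset.sum_le_sum step_entry
  -- counting
  have step_count : ∑ r ∈ V, e ^ (B r).card ≤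
      (((ι + 1) ^ (ι + ι) : ℕ) : ℝ) * ((ι : ℝ) + 1) := by
    rw [← Finset.sum_fiberwise_of_maps_to
      (g := B) (t := (Finset.univ : Finset (Finset (Fin d))))
      (fun r _ => Finset.mem_univ _) (fun r => e ^ (B r).card)]
    have inner_le : ∀ t : Finset (Fin d),
        (∑ r ∈ V.filter (fun r => B r = t), e ^ (B r).card) ≤
          (((ι + 1) ^ (ι + ι) : ℕ) : ℝ) * (if t.card ≤ ι then e ^ t.card else 0) := by
      intro t
      have hconst : ∑ r ∈ V.filter (fun r => B r = t), e ^ (B r).card =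
          ((V.filter (fun r => B r = t)).card : ℝ) * e ^ t.card := by
        rw [Finset.sum_congr rfl (fun r hr => by
          rw [(Finset.mem_filter.1 hr).2]), Finset.sum_const, nsmul_eq_mul]
      rw [hconst]
      by_cases htι : t.card ≤ ι
      · rw [if_pos htι]
        have hcard : ((V.filter (fun r => B r = t)).card : ℝ) ≤
            (((ι + 1) ^ (ι + ι) : ℕ) : ℝ) := by
          have hinj : (V.filter (fun r => B r = t)).card ≤
              ((ι + 1) ^ (ι + ι) : ℕ) := by
            set T : Finset (Fin d) :=
              (Finset.univ.filter fun i => 0 < (s.1 i : ℕ)) ∪ t with hT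
            have hcardT : T.card ≤ ι + ι := by
              refine le_trans (Finset.card_union_le _ _) ?_
              exact Nat.add_le_add (card_supp_le s) htι
            have h5 : (V.filter (fun r => B r = t)).card ≤
                Fintype.card ({i // i ∈ T} → Fin (ι + 1)) := by
              rw [← Finset.card_univ]
              refine Finset.card_le_card_of_injOn
                (fun r => fun j : {i // i ∈ T} => r.1 j.1)
                (fun r _ => Finset.mem_univ _) ?_
              intro r hr r' hr' hrr'
              have hrV := Finset.mem_filter.1 hr
              have hrV' := Finset.mem_filter.1 hr'
              have hBr : B r = t := hrV.2
              have hBr' : B r' = t := hrV'.2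
              refine Subtype.ext (funext fun i => ?_)
              by_cases hiT : i ∈ T
              · exact congrFun hrr' ⟨i, hiT⟩
              · rw [hT, Finset.mem_union] at hiT
                push_neg at hiT
                obtain ⟨hi1, hi2⟩ := hiT
                rw [Finset.mem_filter] at hi1
                push_neg at hi1
                have hsi : (s.1 i : ℕ) = 0 := by
                  have := hi1 (Finset.mem_univ i); omega
                have hri : (r.1 i : ℕ) = 0 := by
                  have h6 : i ∉ B r := hBr ▸ hi2
                  rw [hB, Finset.mem_filter] at h6
                  push_neg at h6
                  have := h6 (Finset.mem_univ i) hsi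
                  omega
                have hri' : (r'.1 i : ℕ) = 0 := by
                  have h6 : i ∉ B r' := hBr' ▸ hi2
                  rw [hB, Finset.mem_filter] at h6
                  push_neg at h6
                  have := h6 (Finset.mem_univ i) hsi
                  omega
                exact Fin.ext (by omega)
            have h7 : Fintype.card ({i // i ∈ T} → Fin (ι + 1)) = (ι + 1) ^ T.card := by
              rw [Fintype.card_fun, Fintype.card_fin, Fintype.card_coe]
            rw [h7] at h5
            exact le_trans h5 (Nat.pow_le_pow_right (Nat.succ_le_succ (Nat.zero_le _)) hcardT)
          exact_mod_cast hinj
        exact mul_le_mul_of_nonneg_right hcard (pow_nonneg he0 _)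
      · rw [if_neg htι, mul_zero]
        have hempty : V.filter (fun r => B r = t) = ∅ := by
          rw [Finset.eq_empty_iff_forall_notMem]
          intro r hr
          have := (Finset.mem_filter.1 hr).2
          exact htι (this ▸ hBcard r)
        rw [hempty, Finset.card_empty, Nat.cast_zero, zero_mul]
    calc ∑ t : Finset (Fin d), ∑ r ∈ V.filter (fun r => B r = t), e ^ (B r).card
        ≤ ∑ t : Finset (Fin d),
            (((ι + 1) ^ (ι + ι) : ℕ) : ℝ) * (if t.card ≤ ι then e ^ t.card else 0) :=
          Finset.sum_le_sum fun t _ => inner_le t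
      _ = (((ι + 1) ^ (ι + ι) : ℕ) : ℝ) *
            ∑ t : Finset (Fin d), (if t.card ≤ ι then e ^ t.card else 0) := by
          rw [Finset.mul_sum]
      _ ≤ (((ι + 1) ^ (ι + ι) : ℕ) : ℝ) * ((ι : ℝ) + 1) := by
          refine mul_le_mul_of_nonneg_left ?_ (by positivity)
          -- sum over subsets, grouped by cardinality
          rw [← Finset.sum_fiberwise_of_maps_to
            (g := Finset.card) (t := Finset.range (d + 1))
            (fun t _ => Finset.mem_range.2 (Nat.lt_succ_of_le
              (le_trans (Finset.card_le_univ t) (by simp))))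
            (fun t => if t.card ≤ ι then e ^ t.card else 0)]
          have hfiber : ∀ b : ℕ, ∑ t ∈ Finset.univ.filter (fun t : Finset (Fin d) =>
              t.card = b), (if t.card ≤ ι then e ^ t.card else 0) =
              ((d.choose b : ℕ) : ℝ) * (if b ≤ ι then e ^ b else 0) := by
            intro b
            rw [Finset.sum_congr rfl (fun t ht => by
              rw [(Finset.mem_filter.1 ht).2]), Finset.sum_const, nsmul_eq_mul]
            congr 2
            have : Finset.univ.filter (fun t : Finset (Fin d) => t.card = b) =
                Finset.powersetCard b (Finset.univ : Finset (Fin d)) := by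
              rw [Finset.powersetCard_eq_filter, Finset.powerset_univ]
            rw [this, Finset.card_powersetCard, Finset.card_univ, Fintype.card_fin]
          rw [Finset.sum_congr rfl (fun b _ => hfiber b)]
          have hterm : ∀ b : ℕ, ((d.choose b : ℕ) : ℝ) * (if b ≤ ι then e ^ b else 0) ≤
              (if b ≤ ι then 1 else 0) := by
            intro b
            by_cases hb : b ≤ ι
            · rw [if_pos hb, if_pos hb]
              have h8 : ((d.choose b : ℕ) : ℝ) ≤ ((d : ℝ)) ^ b := by
                exact_mod_cast Nat.choose_le_pow d b
              calc ((d.choose b : ℕ) : ℝ) * e ^ b ≤ (d : ℝ) ^ b * e ^ b :=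
                  mul_le_mul_of_nonneg_right h8 (pow_nonneg he0 _)
                _ = 1 := by
                    rw [← mul_pow, he, mul_inv_cancel₀ hd0.ne', one_pow]
            · rw [if_neg hb, if_neg hb, mul_zero]
          refine le_trans (Finset.sum_le_sum fun b _ => hterm b) ?_
          rw [Finset.sum_ite, Finset.sum_const, Finset.sum_const]
          simp only [nsmul_eq_mul, mul_one, mul_zero, add_zero]
          have h9 : ((Finset.range (d + 1)).filter (fun b => b ≤ ι)).card ≤ ι + 1 := by
            refine le_trans (Finset.card_le_card (fun b hb => ?_)) (le_of_eq (Finset.card_range (ι + 1)))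
            rw [Finset.mem_filter] at hb
            exact Finset.mem_range.2 (Nat.lt_succ_of_le hb.2)
          exact_mod_cast h9
  calc ∑ r : MIdx d ι, |matc d ι a c s r| = ∑ r ∈ V, |matc d ι a c s r| := step0
    _ ≤ K * ∑ r ∈ V, e ^ (B r).card := step1
    _ ≤ K * ((((ι + 1) ^ (ι + ι) : ℕ) : ℝ) * ((ι : ℝ) + 1)) :=
        mul_le_mul_of_nonneg_left step_count hK0

lemma matc_col_sum {d ι : ℕ} (hd : 0 < d) {a : ℕ → ℝ} (ha : ∀ i ≤ ι, 0 < a i)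
    (c : ℕ → ℕ → ℝ) (hcz : ∀ k j, k < j → c k j = 0) (hc00 : c 0 0 = 1)
    (M : ℝ) (hM1 : 1 ≤ M) (hM : ∀ k j, k ≤ ι → j ≤ ι → |c k j| ≤ M)
    (W : ℝ)
    (hW : ∀ r s : MIdx d ι, Real.sqrt (multinom d ι r * a (degIdx d ι r)) /
        Real.sqrt (multinom d ι s * a (degIdx d ι s)) ≤ W)
    (r : MIdx d ι) :
    ∑ s : MIdx d ι, |matc d ι a c s r| ≤
      W * M ^ ι * (((ι + 1) ^ (ι + ι) : ℕ) : ℝ) := by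
  classical
  have hd0 : (0 : ℝ) < (d : ℝ) := by exact_mod_cast hd
  have hd1 : (1 : ℝ) ≤ (d : ℝ) := by exact_mod_cast hd
  have hW0 : 0 ≤ W := le_trans (by positivity) (hW r r)
  have hK0 : 0 ≤ W * M ^ ι :=
    mul_nonneg hW0 (pow_nonneg (le_trans zero_le_one hM1) ι)
  set V : Finset (MIdx d ι) := Finset.univ.filter
    (fun s => ∀ i, (s.1 i : ℕ) ≤ (r.1 i : ℕ)) with hV
  have step0 : ∑ s : MIdx d ι, |matc d ι a c s r| = ∑ s ∈ V, |matc d ι a c s r| := by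
    refine (Finset.sum_subset (Finset.subset_univ V) (fun s _ hs => ?_)).symm
    rw [hV, Finset.mem_filter] at hs
    push_neg at hs
    obtain ⟨i, hi⟩ := hs (Finset.mem_univ s)
    rw [matc_eq_zero_of_lt hcz i hi, abs_zero]
  have step_entry : ∀ s ∈ V, |matc d ι a c s r| ≤ W * M ^ ι := by
    intro s hs
    have hle : ∀ i, (s.1 i : ℕ) ≤ (r.1 i : ℕ) := (Finset.mem_filter.1 hs).2
    refine le_trans (matc_abs_le hd ha c hc00 M hM1 hM W hW r s hle) ?_
    have hdeg : degIdx d ι s ≤ degIdx d ι r := Finset.sum_le_sum fun i _ => hle i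
    have hexp : ((degIdx d ι s : ℝ) - (degIdx d ι r : ℝ)) / 2 ≤ 0 := by
      have : ((degIdx d ι s : ℕ) : ℝ) ≤ ((degIdx d ι r : ℕ) : ℝ) := by exact_mod_cast hdeg
      linarith
    have h1 : (d : ℝ) ^ (((degIdx d ι s : ℝ) - (degIdx d ι r : ℝ)) / 2) ≤ 1 :=
      Real.rpow_le_one_of_one_le_of_nonpos hd1 hexp
    calc W * M ^ ι * (d : ℝ) ^ (((degIdx d ι s : ℝ) - (degIdx d ι r : ℝ)) / 2)
        ≤ W * M ^ ι * 1 := mul_le_mul_of_nonneg_left h1 hK0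
      _ = W * M ^ ι := mul_one _
  have hcount : (V.card : ℝ) ≤ (((ι + 1) ^ (ι + ι) : ℕ) : ℝ) := by
    have hinj : V.card ≤ ((ι + 1) ^ (ι + ι) : ℕ) := by
      set T : Finset (Fin d) := Finset.univ.filter fun i => 0 < (r.1 i : ℕ) with hT
      have h5 : V.card ≤ Fintype.card ({i // i ∈ T} → Fin (ι + 1)) := by
        rw [← Finset.card_univ]
        refine Finset.card_le_card_of_injOn
          (fun s => fun j : {i // i ∈ T} => s.1 j.1)
          (fun s _ => Finset.mem_univ _) ?_
        intro s hs s' hs' hss'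
        have hsV := (Finset.mem_filter.1 hs).2
        have hsV' := (Finset.mem_filter.1 hs').2
        refine Subtype.ext (funext fun i => ?_)
        by_cases hiT : i ∈ T
        · exact congrFun hss' ⟨i, hiT⟩
        · rw [hT, Finset.mem_filter] at hiT
          push_neg at hiT
          have hri : (r.1 i : ℕ) = 0 := by
            have := hiT (Finset.mem_univ i); omega
          have h6 : (s.1 i : ℕ) = 0 := by have := hsV i; omega
          have h7 : (s'.1 i : ℕ) = 0 := by have := hsV' i; omega
          exact Fin.ext (by omega)
      have h8 : Fintype.card ({i // i ∈ T} → Fin (ι + 1)) = (ι + 1) ^ T.card := by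
        rw [Fintype.card_fun, Fintype.card_fin, Fintype.card_coe]
      rw [h8] at h5
      refine le_trans h5 (Nat.pow_le_pow_right (Nat.succ_le_succ (Nat.zero_le _)) ?_)
      exact le_trans (card_supp_le r) (Nat.le_add_right ι ι)
    exact_mod_cast hinj
  calc ∑ s : MIdx d ι, |matc d ι a c s r| = ∑ s ∈ V, |matc d ι a c s r| := step0
    _ ≤ ∑ _s ∈ V, W * M ^ ι := Finset.sum_le_sum step_entry
    _ = (V.card : ℝ) * (W * M ^ ι) := by rw [Finset.sum_const, nsmul_eq_mul]
    _ ≤ (((ι + 1) ^ (ι + ι) : ℕ) : ℝ) * (W * M ^ ι) :=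
        mul_le_mul_of_nonneg_right hcount hK0
    _ = W * M ^ ι * (((ι + 1) ^ (ι + ι) : ℕ) : ℝ) := by ring


/-- Every polynomial of degree at most `n` is a linear combination of `q 0, …, q n`. -/
lemma span_aux (q : ℕ → Polynomial ℝ) (hqdeg : ∀ k, (q k).natDegree = k)
    (hqlead : ∀ k, (q k).leadingCoeff ≠ 0) :
    ∀ (n : ℕ) (p : Polynomial ℝ), p.natDegree ≤ n →
      ∃ m : ℕ → ℝ, p = ∑ j ∈ Finset.range (n + 1), Polynomial.C (m j) * q j := by
  intro n
  induction n with
  | zero =>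
    intro p hp
    have hl : (q 0).coeff 0 ≠ 0 := by
      have := hqlead 0
      rwa [Polynomial.leadingCoeff, hqdeg 0] at this
    refine ⟨fun _ => p.coeff 0 / (q 0).coeff 0, ?_⟩
    rw [Finset.sum_range_one]
    show p = Polynomial.C (p.coeff 0 / (q 0).coeff 0) * q 0
    set l := (q 0).coeff 0 with hldef
    have h0 : q 0 = Polynomial.C l :=
      Polynomial.eq_C_of_natDegree_le_zero (le_of_eq (hqdeg 0))
    rw [h0, ← Polynomial.C_mul, div_mul_cancel₀ _ hl,
      ← Polynomial.eq_C_of_natDegree_le_zero hp]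
  | succ n ih =>
    intro p hp
    have hlne : (q (n + 1)).leadingCoeff ≠ 0 := hqlead (n + 1)
    set p' := p - Polynomial.C (p.coeff (n + 1) / (q (n + 1)).leadingCoeff) * q (n + 1)
      with hp'
    have hdeg' : p'.natDegree ≤ n := by
      rw [Polynomial.natDegree_le_iff_coeff_eq_zero]
      intro k hk
      rw [hp', Polynomial.coeff_sub, Polynomial.coeff_C_mul]
      rcases Nat.lt_or_ge (n + 1) k with h | h
      · have e1 : p.coeff k = 0 :=
          Polynomial.coeff_eq_zero_of_natDegree_lt (lt_of_le_of_lt hp h)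
        have e2 : (q (n + 1)).coeff k = 0 :=
          Polynomial.coeff_eq_zero_of_natDegree_lt
            (show (q (n + 1)).natDegree < k by rw [hqdeg]; exact h)
        rw [e1, e2, mul_zero, sub_zero]
      · have hk1 : k = n + 1 := by omega
        subst hk1
        have hcq : (q (n + 1)).coeff (n + 1) = (q (n + 1)).leadingCoeff := by
          rw [Polynomial.leadingCoeff, hqdeg]
        rw [hcq, div_mul_cancel₀ _ hlne, sub_self]
    obtain ⟨m', hm'⟩ := ih p' hdeg'
    refine ⟨Function.update m' (n + 1) (p.coeff (n + 1) / (q (n + 1)).leadingCoeff), ?_⟩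
    rw [Finset.sum_range_succ]
    simp only [Function.update_self]
    have hcongr : (∑ j ∈ Finset.range (n + 1),
        Polynomial.C (Function.update m' (n + 1)
          (p.coeff (n + 1) / (q (n + 1)).leadingCoeff) j) * q j)
        = ∑ j ∈ Finset.range (n + 1), Polynomial.C (m' j) * q j :=
      Finset.sum_congr rfl fun j hj => by
        rw [Function.update_of_ne (Nat.ne_of_lt (Finset.mem_range.1 hj))]
    rw [hcongr, ← hm', hp']
    ring

/-- boundedness of the change of basis. If `α_0, …, α_ι > 0` and `P`
satisfies the coordinate-distribution assumption with all moments finite, then the invertible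
change-of-basis matrix `Λ` with `Φ(x) = Λᵀ Ψ(x)` satisfies `‖Λ‖_op ≤ C(ι)` and
`‖Λ⁻¹‖_op ≤ C(ι)` for a constant `C(ι)` independent of the dimension `d`. -/
theorem statement_14
    (P : Measure ℝ) [IsProbabilityMeasure P]
    (hmean : ∫ z, z ∂P = 0)
    (ν : ℝ) (hν : 1 < ν)
    (htail : ∃ Ct > 0, ∀ t : ℝ, 0 ≤ t →
        P {z | t ≤ |z|} ≤ ENNReal.ofReal (Ct * (1 + t) ^ (-ν)))
    (hsupp : ∀ S : Finset ℝ, P (S : Set ℝ) < 1)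
    (hmom : ∀ m : ℕ, Integrable (fun z => z ^ m) P)
    (q : ℕ → Polynomial ℝ)
    (hq0 : q 0 = 1)
    (hqdeg : ∀ k, (q k).natDegree = k)
    (hqlead : ∀ k, 0 < (q k).leadingCoeff)
    (hqorth : ∀ j k, (∫ z, (q j).eval z * (q k).eval z ∂P) = if j = k then 1 else 0)
    (ι : ℕ) (hι : 1 ≤ ι) (a : ℕ → ℝ) (hapos : ∀ i ≤ ι, 0 < a i) :
    ∃ C > 0, ∀ (d : ℕ), 0 < d → ∀ Λ : Matrix (MIdx d ι) (MIdx d ι) ℝ,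
      IsUnit Λ.det →
      (∀ x : Fin d → ℝ, Phi d ι a x = (Matrix.transpose Λ).mulVec (Psi d ι q a x)) →
      (∀ u : MIdx d ι → ℝ,
          Real.sqrt (∑ s, Λ.mulVec u s ^ 2) ≤ C * Real.sqrt (∑ s, u s ^ 2)) ∧
        (∀ u : MIdx d ι → ℝ,
          Real.sqrt (∑ s, Λ⁻¹.mulVec u s ^ 2) ≤ C * Real.sqrt (∑ s, u s ^ 2)) := by
  classical
  -- the constant-term of `q 1` vanishes (mean-zero assumption)
  have hl1 : (q 1).coeff 1 ≠ 0 := by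
    have := (hqlead 1).ne'
    rwa [Polynomial.leadingCoeff, hqdeg 1] at this
  have hq1eq : q 1 = Polynomial.C ((q 1).coeff 1) * Polynomial.X +
      Polynomial.C ((q 1).coeff 0) :=
    Polynomial.eq_X_add_C_of_natDegree_le_one (le_of_eq (hqdeg 1))
  have hc0 : (q 1).coeff 0 = 0 := by
    have horth := hqorth 1 0
    rw [if_neg one_ne_zero] at horth
    have heval : (fun z : ℝ => (q 1).eval z * (q 0).eval z) =
        fun z : ℝ => (q 1).coeff 1 * z + (q 1).coeff 0 := by
      funext z
      rw [hq0]
      conv_lhs => rw [hq1eq]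
      simp
    rw [heval] at horth
    have hint1 : Integrable (fun z : ℝ => (q 1).coeff 1 * z) P := by
      simpa [pow_one] using (hmom 1).const_mul ((q 1).coeff 1)
    have hint2 : Integrable (fun _ : ℝ => (q 1).coeff 0) P := integrable_const _
    rw [integral_add hint1 hint2, integral_const_mul, hmean, mul_zero, zero_add,
      integral_const, probReal_univ, one_smul] at horth
    exact horth
  -- coefficient arrays
  set b : ℕ → ℕ → ℝ := fun k j => (q k).coeff j with hbdef
  have hbz : ∀ k j, k < j → b k j = 0 := fun k j h =>
    Polynomial.coeff_eq_zero_of_natDegree_lt (by rw [hqdeg]; exact h)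
  have hb00 : b 0 0 = 1 := by rw [hbdef]; simp [hq0]
  have hb10 : b 1 0 = 0 := hc0
  have hb_id : ∀ k ≤ ι, ∀ t : ℝ, (q k).eval t =
      ∑ j ∈ Finset.range (ι + 1), b k j * t ^ j := by
    intro k hk t
    have hlt : (q k).natDegree < ι + 1 := by rw [hqdeg]; omega
    exact Polynomial.eval_eq_sum_range' hlt t
  have hspan := span_aux q hqdeg (fun k => (hqlead k).ne')
  set m : ℕ → ℕ → ℝ := fun k =>
    if k = 0 then (fun j => if j = 0 then 1 else 0)
    else if k = 1 then (fun j => if j = 1 then ((q 1).coeff 1)⁻¹ else 0)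
    else (fun j => if j ≤ k then
      Classical.choose (hspan k (Polynomial.X ^ k)
        (le_of_eq (Polynomial.natDegree_X_pow k))) j else 0) with hmdef
  have hmz : ∀ k j, k < j → m k j = 0 := by
    intro k j h
    by_cases h0 : k = 0
    · subst h0
      have hj0 : j ≠ 0 := by omega
      simp [hmdef, hj0]
    · by_cases h1 : k = 1
      · subst h1
        have hj1 : j ≠ 1 := by omega
        simp [hmdef, hj1]
      · have hkj : ¬ j ≤ k := by omega
        simp [hmdef, h0, h1, hkj]
  have hm00 : m 0 0 = 1 := by simp [hmdef]
  have hm10 : m 1 0 = 0 := by simp [hmdef]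
  have hm1j : ∀ j, j ≠ 1 → m 1 j = 0 := by
    intro j hj
    rcases Nat.eq_zero_or_pos j with hj0 | hj0
    · subst hj0; exact hm10
    · exact hmz 1 j (by omega)
  have hm0j : ∀ j, j ≠ 0 → m 0 j = 0 := fun j hj => hmz 0 j (by omega)
  have hm11 : m 1 1 = ((q 1).coeff 1)⁻¹ := by simp [hmdef]
  have hm_id : ∀ k ≤ ι, ∀ t : ℝ, t ^ k =
      ∑ j ∈ Finset.range (ι + 1), m k j * (q j).eval t := by
    intro k hk t
    by_cases h0 : k = 0
    · subst h0
      rw [Finset.sum_eq_single_of_mem (0 : ℕ)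
        (Finset.mem_range.2 (by omega : (0:ℕ) < ι + 1))
        (fun j _ hj => by rw [hm0j j hj, zero_mul])]
      rw [hm00, hq0]
      simp
    · by_cases h1 : k = 1
      · subst h1
        rw [Finset.sum_eq_single_of_mem (1 : ℕ)
          (Finset.mem_range.2 (by omega : (1:ℕ) < ι + 1))
          (fun j _ hj => by rw [hm1j j hj, zero_mul])]
        have heq : (q 1).eval t = (q 1).coeff 1 * t := by
          conv_lhs => rw [hq1eq]
          rw [hc0]
          simp
        rw [hm11, heq, pow_one, ← mul_assoc, inv_mul_cancel₀ hl1, one_mul]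
      · have hspec := Classical.choose_spec (hspan k (Polynomial.X ^ k)
          (le_of_eq (Polynomial.natDegree_X_pow k)))
        have heval := congrArg (Polynomial.eval t) hspec
        rw [Polynomial.eval_pow, Polynomial.eval_X, Polynomial.eval_finset_sum] at heval
        simp only [Polynomial.eval_mul, Polynomial.eval_C] at heval
        rw [heval]
        rw [← Finset.sum_subset (Finset.range_subset_range.2 (by omega : k + 1 ≤ ι + 1))
          (fun j _ hj => by
            have hjk : k < j := by
              rw [Finset.mem_range, not_lt] at hj
              omega
            rw [hmz k j hjk, zero_mul])]
        refine Finset.sum_congr rfl fun j hj => ?_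
        have hjk : j ≤ k := by
          rw [Finset.mem_range] at hj
          omega
        have hmval : m k j = Classical.choose (hspan k (Polynomial.X ^ k)
            (le_of_eq (Polynomial.natDegree_X_pow k))) j := by
          simp [hmdef, h0, h1, hjk]
        rw [hmval]
  -- global coefficient bound
  set M : ℝ := 1 + ∑ k ∈ Finset.range (ι + 1), ∑ j ∈ Finset.range (ι + 1),
    (|m k j| + |b k j|) with hMdef
  have hMsum_nonneg : (0:ℝ) ≤ ∑ k ∈ Finset.range (ι + 1), ∑ j ∈ Finset.range (ι + 1),
      (|m k j| + |b k j|) :=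
    Finset.sum_nonneg fun k _ => Finset.sum_nonneg fun j _ => by positivity
  have hM1 : 1 ≤ M := le_add_of_nonneg_right hMsum_nonneg
  have hMboth : ∀ k j, k ≤ ι → j ≤ ι → |m k j| + |b k j| ≤ M := by
    intro k j hk hj
    calc |m k j| + |b k j|
        ≤ ∑ j' ∈ Finset.range (ι + 1), (|m k j'| + |b k j'|) :=
          Finset.single_le_sum (f := fun j' => |m k j'| + |b k j'|)
            (fun j' _ => by positivity) (Finset.mem_range.2 (by omega))
      _ ≤ ∑ k' ∈ Finset.range (ι + 1), ∑ j' ∈ Finset.range (ι + 1),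
            (|m k' j'| + |b k' j'|) :=
          Finset.single_le_sum
            (f := fun k' => ∑ j' ∈ Finset.range (ι + 1), (|m k' j'| + |b k' j'|))
            (fun k' _ => Finset.sum_nonneg fun j' _ => by positivity)
            (Finset.mem_range.2 (by omega))
      _ ≤ M := by rw [hMdef]; linarith
  have hMm : ∀ k j, k ≤ ι → j ≤ ι → |m k j| ≤ M := fun k j hk hj =>
    le_trans (le_add_of_nonneg_right (abs_nonneg _)) (hMboth k j hk hj)
  have hMb : ∀ k j, k ≤ ι → j ≤ ι → |b k j| ≤ M := fun k j hk hj =>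
    le_trans (le_add_of_nonneg_left (abs_nonneg _)) (hMboth k j hk hj)
  -- weight-ratio constant
  set Amax : ℝ := ∑ i ∈ Finset.range (ι + 1), a i with hAmaxdef
  have hne : (Finset.range (ι + 1)).Nonempty := ⟨0, Finset.mem_range.2 (by omega)⟩
  set Amin : ℝ := (Finset.range (ι + 1)).inf' hne a with hAmindef
  have hAmin0 : 0 < Amin := by
    rw [hAmindef, Finset.lt_inf'_iff]
    intro i hi
    exact hapos i (Nat.lt_succ_iff.1 (Finset.mem_range.1 hi))
  have hAmax : ∀ i ≤ ι, a i ≤ Amax := fun i hi =>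
    Finset.single_le_sum (fun j hj => (hapos j (by
      have := Finset.mem_range.1 hj; omega)).le) (Finset.mem_range.2 (by omega))
  have hAminle : ∀ i ≤ ι, Amin ≤ a i := fun i hi =>
    Finset.inf'_le a (Finset.mem_range.2 (by omega))
  set W : ℝ := Real.sqrt ((Nat.factorial ι : ℝ) * Amax) / Real.sqrt Amin with hWdef
  have hWbound : ∀ (d : ℕ) (r s : MIdx d ι),
      Real.sqrt (multinom d ι r * a (degIdx d ι r)) /
        Real.sqrt (multinom d ι s * a (degIdx d ι s)) ≤ W := by
    intro d r s
    rw [hWdef]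
    refine div_le_div₀ (Real.sqrt_nonneg _) ?_ (Real.sqrt_pos.2 hAmin0) ?_
    · refine Real.sqrt_le_sqrt ?_
      have h1 : a (degIdx d ι r) ≤ Amax := hAmax _ (degIdx_le r)
      have h2 := multinom_le r
      have h3 := hapos _ (degIdx_le r)
      have h4 := multinom_pos r
      nlinarith
    · refine Real.sqrt_le_sqrt ?_
      have h1 : Amin ≤ a (degIdx d ι s) := hAminle _ (degIdx_le s)
      have h2 := one_le_multinom s
      have h3 := hapos _ (degIdx_le s)
      nlinarith
  have hW0 : 0 ≤ W := by rw [hWdef]; positivity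
  set G : ℝ := (((ι + 1) ^ (ι + ι) : ℕ) : ℝ) with hGdef
  have hG0 : 0 ≤ G := by rw [hGdef]; positivity
  set R : ℝ := W * M ^ ι * (G * ((ι : ℝ) + 1)) with hRdef
  have hKG : W * M ^ ι * G ≤ R := by
    have h1 : (0:ℝ) ≤ W * M ^ ι * G :=
      mul_nonneg (mul_nonneg hW0 (pow_nonneg (by linarith) _)) hG0
    have h2 : (0:ℝ) ≤ (ι : ℝ) := Nat.cast_nonneg ι
    rw [hRdef]
    nlinarith
  refine ⟨max R 1, lt_of_lt_of_le one_pos (le_max_right _ _), ?_⟩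
  intro d hd Λ hdet hΛ
  -- identification of Λ and Λ⁻¹
  have hPhiM : ∀ x, Phi d ι a x = (matc d ι a m).transpose.mulVec (Psi d ι q a x) := by
    intro x
    funext r
    have htr := matc_transfer hd hapos m hmz (fun k t => t ^ k)
      (fun j t => (q j).eval t) hm_id x r
    have hmv : (matc d ι a m).transpose.mulVec (Psi d ι q a x) r =
        ∑ s, matc d ι a m s r * Psi d ι q a x s := by
      simp [Matrix.mulVec, dotProduct, Matrix.transpose_apply]
    rw [hmv]
    exact htr
  have hPsiB : ∀ x, Psi d ι q a x = (matc d ι a b).transpose.mulVec (Phi d ι a x) := by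
    intro x
    funext r
    have htr := matc_transfer hd hapos b hbz (fun k t => (q k).eval t)
      (fun j t => t ^ j) hb_id x r
    have hmv : (matc d ι a b).transpose.mulVec (Phi d ι a x) r =
        ∑ s, matc d ι a b s r * Phi d ι a x s := by
      simp [Matrix.mulVec, dotProduct, Matrix.transpose_apply]
    rw [hmv]
    exact htr
  have key : ∀ N : Matrix (MIdx d ι) (MIdx d ι) ℝ,
      (∀ x, Phi d ι a x = N.transpose.mulVec (Psi d ι q a x)) →
      matc d ι a b * N = 1 := by
    intro N hN
    apply eq_one_of_fix_phi hd hapos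
    intro x
    rw [Matrix.transpose_mul, ← Matrix.mulVec_mulVec, ← hPsiB x]
    exact (hN x).symm
  have h1 : matc d ι a b * Λ = 1 := key Λ hΛ
  have h2 : matc d ι a b * matc d ι a m = 1 := key _ hPhiM
  have hinv : Λ⁻¹ = matc d ι a b := Matrix.inv_eq_left_inv h1
  have hΛeq : Λ = matc d ι a m := by
    have h1' : Λ * matc d ι a b = 1 := mul_eq_one_comm.1 h1
    calc Λ = Λ * 1 := (mul_one Λ).symm
      _ = Λ * (matc d ι a b * matc d ι a m) := by rw [h2]
      _ = (Λ * matc d ι a b) * matc d ι a m := by rw [mul_assoc]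
      _ = matc d ι a m := by rw [h1', one_mul]
  have hRC : R ≤ max R 1 := le_max_left _ _
  have hbound : ∀ c' : ℕ → ℕ → ℝ, (∀ k j, k < j → c' k j = 0) → c' 0 0 = 1 → c' 1 0 = 0 →
      (∀ k j, k ≤ ι → j ≤ ι → |c' k j| ≤ M) →
      ∀ u : MIdx d ι → ℝ,
        Real.sqrt (∑ s, (matc d ι a c' : Matrix (MIdx d ι) (MIdx d ι) ℝ).mulVec u s ^ 2) ≤
          max R 1 * Real.sqrt (∑ s, u s ^ 2) := by
    intro c' hcz' hc00' hc10' hM' u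
    refine mulVec_l2_bound _ (max R 1)
      (le_trans zero_le_one (le_max_right _ _)) ?_ ?_ u
    · intro s
      refine le_trans (matc_row_sum hd hapos c' hcz' hc00' hc10' M hM1 hM' W (hWbound d) s) ?_
      rw [← hGdef, ← hRdef] at *
      exact le_trans (le_of_eq rfl) hRC
    · intro r
      refine le_trans (matc_col_sum hd hapos c' hcz' hc00' M hM1 hM' W (hWbound d) r) ?_
      exact le_trans hKG hRC
  constructor
  · intro u
    rw [hΛeq]
    exact hbound m hmz hm00 hm10 hMm u
  · intro u
    rw [hinv]
    exact hbound b hbz hb00 hb10 hMb u
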